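/- The digit-interleaving bijection H_k : Z_p^k → Z_p is measure-preserving: it pushes the normalized Haar measure on Z_p^k forward to the normalized Haar measure on Z_p. -/

import Mathlib

open MeasureTheory

variable {p : ℕ}

/-- The `i`-th base-`p` digit of a `p`-adic integer. -/
noncomputable def padicDigit [Fact p.Prime] (x : ℤ_[p]) (i : ℕ) : ℕ :=
  (x.appr (i + 1) - x.appr i) / p ^ i

/-- Congruence modulo `p^n` on `ℤ_[p]`. -/
def CongMod [Fact p.Prime] (n : ℕ) (x y : ℤ_[p]) : Prop :=
  PadicInt.toZModPow n x = PadicInt.toZModPow n y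

/-- Coordinatewise congruence modulo `p^n` on `ℤ_[p]^k`. -/
def CongModVec [Fact p.Prime] {k : ℕ} (n : ℕ) (x y : Fin k → ℤ_[p]) : Prop :=
  ∀ i, CongMod n (x i) (y i)

/-- Coordinatewise reduction `ℤ_[p]^k → (ℤ/p^n ℤ)^k`. -/
noncomputable def redVec [Fact p.Prime] {k : ℕ} (n : ℕ) (x : Fin k → ℤ_[p]) : Fin k → ZMod (p ^ n) :=
  fun i => PadicInt.toZModPow n (x i)

/-- The digit-interleaving map `H_k : ℤ_[p]^k → ℤ_[p]`. -/
noncomputable def Hk [Fact p.Prime] (k : ℕ) (hk : 0 < k) (x : Fin k → ℤ_[p]) : ℤ_[p] :=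
  ∑' m : ℕ, (padicDigit (x ⟨m % k, Nat.mod_lt m hk⟩) (m / k) : ℤ_[p]) * (p : ℤ_[p]) ^ m

/-- `F` is transitive modulo `p^n`: the induced map on `(ℤ/p^n ℤ)^k` is a single cycle. -/
def IsTransitiveModVec [Fact p.Prime] {k : ℕ}
    (F : (Fin k → ℤ_[p]) → (Fin k → ℤ_[p])) (n : ℕ) : Prop :=
  ∀ x y : Fin k → ℤ_[p], ∃ j : ℕ, CongModVec n (F^[j] x) y

/-- `G` is transitive modulo `p^n`: the induced map on `ℤ/p^n ℤ` is a single cycle. -/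
def IsTransitiveModZ [Fact p.Prime] (G : ℤ_[p] → ℤ_[p]) (n : ℕ) : Prop :=
  ∀ x y : ℤ_[p], ∃ j : ℕ, CongMod n (G^[j] x) y

noncomputable instance [Fact p.Prime] : MeasurableSpace ℤ_[p] := borel _
instance [Fact p.Prime] : BorelSpace ℤ_[p] := ⟨rfl⟩

/-- The normalized Haar measure on `ℤ_[p]`. -/
noncomputable def haarZ [Fact p.Prime] : Measure ℤ_[p] :=
  Measure.addHaarMeasure (⊤ : TopologicalSpace.PositiveCompacts ℤ_[p])

/-- The normalized Haar measure on `ℤ_[p]^k`. -/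
noncomputable def haarZk [Fact p.Prime] (k : ℕ) : Measure (Fin k → ℤ_[p]) :=
  Measure.addHaarMeasure (⊤ : TopologicalSpace.PositiveCompacts (Fin k → ℤ_[p]))

/-! ### Auxiliary material -/

open Finset Function

section NatDigits

/-- The `m`-th base-`p` digit of a natural number. -/
def natDigit (p v m : ℕ) : ℕ := v / p ^ m % p

lemma natDigit_lt {p : ℕ} (hp : 1 < p) (v m : ℕ) : natDigit p v m < p :=
  Nat.mod_lt _ (by omega)

lemma sum_digits_lt {p : ℕ} (hp : 1 < p) {d : ℕ → ℕ} (hd : ∀ j, d j < p) (n : ℕ) :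
    ∑ j ∈ range n, d j * p ^ j < p ^ n := by
  induction n with
  | zero => simpa using Nat.one_pos
  | succ n ih =>
    rw [Finset.sum_range_succ, pow_succ]
    have h1 : d n * p ^ n + p ^ n ≤ p ^ n * p := by
      have : (d n + 1) * p ^ n ≤ p * p ^ n := Nat.mul_le_mul_right _ (hd n)
      nlinarith
    omega

lemma sum_natDigit_eq_mod {p : ℕ} (n v : ℕ) :
    ∑ m ∈ range n, natDigit p v m * p ^ m = v % p ^ n := by
  induction n with
  | zero => simp [Nat.mod_one]
  | succ n ih =>
    rw [Finset.sum_range_succ, ih, pow_succ, Nat.mod_mul, natDigit]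
    ring

lemma natDigit_sum {p : ℕ} (hp : 1 < p) :
    ∀ (i n : ℕ) (d : ℕ → ℕ), (∀ j, d j < p) → i < n →
      natDigit p (∑ j ∈ range n, d j * p ^ j) i = d i := by
  intro i
  induction i with
  | zero =>
    intro n d hd hi
    obtain ⟨n, rfl⟩ : ∃ m, n = m + 1 := ⟨n - 1, by omega⟩
    rw [Finset.sum_range_succ']
    simp only [natDigit, pow_zero, Nat.div_one]
    have : ∀ j ∈ range n, d (j+1) * p ^ (j+1) = p * (d (j+1) * p ^ j) := by
      intro j _; ring
    rw [Finset.sum_congr rfl this, ← Finset.mul_sum, mul_one]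
    rw [Nat.mul_add_mod]
    exact Nat.mod_eq_of_lt (hd 0)
  | succ i ih =>
    intro n d hd hi
    obtain ⟨n, rfl⟩ : ∃ m, n = m + 1 := ⟨n - 1, by omega⟩
    have key : (∑ j ∈ range (n+1), d j * p ^ j) / p = ∑ j ∈ range n, d (j+1) * p ^ j := by
      rw [Finset.sum_range_succ']
      have : ∀ j ∈ range n, d (j+1) * p ^ (j+1) = p * (d (j+1) * p ^ j) := by
        intro j _; ring
      rw [Finset.sum_congr rfl this, ← Finset.mul_sum, pow_zero, mul_one]
      rw [Nat.mul_add_div (by omega), Nat.div_eq_of_lt (hd 0), add_zero]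
    have : natDigit p (∑ j ∈ range (n+1), d j * p ^ j) (i+1)
        = natDigit p ((∑ j ∈ range (n+1), d j * p ^ j) / p) i := by
      simp only [natDigit, pow_succ, Nat.div_div_eq_div_mul]
      rw [mul_comm (p^i) p, ← Nat.div_div_eq_div_mul]
    rw [this, key]
    exact ih n (fun j => d (j+1)) (fun j => hd (j+1)) (by omega)

end NatDigits

section PadicAux
variable [hp : Fact p.Prime]

lemma p_one_lt : 1 < p := hp.out.one_lt

instance neZero_ppow {n : ℕ} : NeZero (p ^ n) := ⟨pow_ne_zero _ hp.out.ne_zero⟩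

lemma padicDigit_lt (x : ℤ_[p]) (i : ℕ) : padicDigit x i < p := by
  have h1 := PadicInt.appr_lt x (i+1)
  have hpos : 0 < p ^ i := Nat.pow_pos hp.out.pos
  rw [padicDigit, Nat.div_lt_iff_lt_mul hpos]
  calc x.appr (i+1) - x.appr i ≤ x.appr (i+1) := Nat.sub_le _ _
    _ < p ^ (i+1) := h1
    _ = p * p ^ i := by rw [pow_succ]; ring

lemma appr_eq_sum (x : ℤ_[p]) (n : ℕ) :
    x.appr n = ∑ i ∈ range n, padicDigit x i * p ^ i := by
  induction n with
  | zero => rfl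
  | succ n ih =>
    rw [Finset.sum_range_succ, ← ih, padicDigit,
      Nat.div_mul_cancel (PadicInt.dvd_appr_sub_appr x n (n+1) (by omega)),
      Nat.add_sub_cancel' (PadicInt.appr_mono x (by omega))]

lemma toZModPow_eq_cast_appr (x : ℤ_[p]) (n : ℕ) :
    PadicInt.toZModPow n x = ((x.appr n : ℕ) : ZMod (p ^ n)) := rfl

lemma val_toZModPow (x : ℤ_[p]) (n : ℕ) :
    (PadicInt.toZModPow n x).val = x.appr n := by
  rw [toZModPow_eq_cast_appr, ZMod.val_cast_of_lt (PadicInt.appr_lt x n)]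

lemma padicDigit_eq_natDigit (x : ℤ_[p]) {i n : ℕ} (hi : i < n) :
    padicDigit x i = natDigit p (PadicInt.toZModPow n x).val i := by
  rw [val_toZModPow, appr_eq_sum x n]
  exact (natDigit_sum p_one_lt i n _ (fun j => padicDigit_lt x j) hi).symm

lemma summable_digits (D : ℕ → ℕ) :
    Summable (fun m => ((D m : ℤ_[p]) * (p:ℤ_[p]) ^ m)) := by
  apply Summable.of_norm_bounded (g := fun m => ((p:ℝ)⁻¹) ^ m)
  · exact summable_geometric_of_lt_one (by positivity)
      (by rw [inv_lt_one_iff₀]; right; exact_mod_cast hp.out.one_lt)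
  · intro m
    rw [norm_mul]
    calc ‖(D m : ℤ_[p])‖ * ‖(p:ℤ_[p])^m‖ ≤ 1 * ‖(p:ℤ_[p])^m‖ := by
          apply mul_le_mul_of_nonneg_right (PadicInt.norm_le_one _) (norm_nonneg _)
      _ = ((p:ℝ)⁻¹)^m := by
          rw [one_mul, PadicInt.norm_p_pow, inv_pow, ← zpow_natCast, ← zpow_neg]

lemma toZModPow_tsum_digits (D : ℕ → ℕ) (N : ℕ) :
    PadicInt.toZModPow N (∑' m : ℕ, ((D m : ℤ_[p]) * (p:ℤ_[p]) ^ m))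
      = ((∑ m ∈ Finset.range N, D m * p ^ m : ℕ) : ZMod (p ^ N)) := by
  have hs := summable_digits (p := p) D
  have hsplit := Summable.sum_add_tsum_nat_add (f := fun m => ((D m : ℤ_[p]) * (p:ℤ_[p]) ^ m)) N hs
  have htail : (∑' i : ℕ, ((D (i + N) : ℤ_[p]) * (p:ℤ_[p]) ^ (i + N)))
      = (p:ℤ_[p])^N * ∑' i : ℕ, ((D (i + N) : ℤ_[p]) * (p:ℤ_[p]) ^ i) := by
    rw [← (summable_digits (p := p) (fun i => D (i + N))).tsum_mul_left ((p:ℤ_[p])^N)]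
    exact tsum_congr (fun i => by ring)
  have hker : PadicInt.toZModPow N
      ((∑' m : ℕ, ((D m : ℤ_[p]) * (p:ℤ_[p]) ^ m)) - ∑ m ∈ Finset.range N, ((D m : ℤ_[p]) * (p:ℤ_[p]) ^ m)) = 0 := by
    rw [← RingHom.mem_ker, PadicInt.ker_toZModPow, ← hsplit, add_sub_cancel_left, htail,
      Ideal.mem_span_singleton]
    exact Dvd.intro _ rfl
  rw [map_sub, sub_eq_zero] at hker
  rw [hker]
  push_cast
  rw [map_sum]
  congr 1
  ext m
  rw [map_mul, map_natCast, map_pow, map_natCast]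

lemma cyl_eq_closedBall {N : ℕ} {a : ZMod (p ^ N)} {x₀ : ℤ_[p]}
    (h : PadicInt.toZModPow N x₀ = a) :
    (PadicInt.toZModPow N) ⁻¹' {a} = Metric.closedBall x₀ ((p:ℝ) ^ (-(N:ℤ))) := by
  ext y
  simp only [Set.mem_preimage, Set.mem_singleton_iff, Metric.mem_closedBall, dist_eq_norm]
  rw [← h, ← sub_eq_zero, ← map_sub, ← RingHom.mem_ker, PadicInt.ker_toZModPow,
    ← PadicInt.norm_le_pow_iff_mem_span_pow]

lemma cyl_isOpen (N : ℕ) (a : ZMod (p ^ N)) :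
    IsOpen ((PadicInt.toZModPow N : ℤ_[p] → ZMod (p ^ N)) ⁻¹' {a}) := by
  rcases Set.eq_empty_or_nonempty ((PadicInt.toZModPow N : ℤ_[p] → ZMod (p ^ N)) ⁻¹' {a}) with h | ⟨x₀, hx₀⟩
  · rw [h]; exact isOpen_empty
  · rw [cyl_eq_closedBall hx₀]
    have : Metric.closedBall x₀ ((p:ℝ) ^ (-(N:ℤ))) = Metric.ball x₀ ((p:ℝ) ^ (-(N:ℤ) + 1)) := by
      ext y
      simp only [Metric.mem_closedBall, Metric.mem_ball, dist_eq_norm]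
      exact PadicInt.norm_le_pow_iff_norm_lt_pow_add_one _ _
    rw [this]; exact Metric.isOpen_ball

lemma cyl_measurable (N : ℕ) (a : ZMod (p ^ N)) :
    MeasurableSet ((PadicInt.toZModPow N : ℤ_[p] → ZMod (p ^ N)) ⁻¹' {a}) :=
  (cyl_isOpen N a).measurableSet

lemma toZModPow_surj (N : ℕ) :
    Function.Surjective (PadicInt.toZModPow N : ℤ_[p] → ZMod (p ^ N)) := fun a =>
  ⟨((a.val : ℕ) : ℤ_[p]), by rw [map_natCast, ZMod.natCast_val, ZMod.cast_id]⟩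

/-- The cylinders at levels that are multiples of `k`. -/
def cylBasis (k : ℕ) : Set (Set ℤ_[p]) :=
  {s | ∃ (n : ℕ) (a : ZMod (p ^ (n * k))),
    s = (PadicInt.toZModPow (n * k) : ℤ_[p] → ZMod (p ^ (n*k))) ⁻¹' {a}}

lemma cylBasis_isBasis (k : ℕ) (hk : 0 < k) :
    TopologicalSpace.IsTopologicalBasis (cylBasis (p := p) k) := by
  apply TopologicalSpace.isTopologicalBasis_of_isOpen_of_nhds
  · rintro s ⟨n, a, rfl⟩; exact cyl_isOpen _ _
  · intro x u hxu hu
    obtain ⟨ε, hε, hball⟩ := Metric.isOpen_iff.mp hu x hxu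
    obtain ⟨n, hn⟩ := PadicInt.exists_pow_neg_lt p hε
    refine ⟨_, ⟨n, PadicInt.toZModPow (n * k) x, rfl⟩, rfl, fun y hy => hball ?_⟩
    rw [cyl_eq_closedBall rfl] at hy
    have h1 : ((p:ℝ) ^ (-((n*k:ℕ):ℤ))) ≤ (p:ℝ) ^ (-(n:ℤ)) := by
      apply zpow_le_zpow_right₀ (by exact_mod_cast hp.out.one_le)
      have : n ≤ n * k := Nat.le_mul_of_pos_right n hk
      omega
    exact lt_of_le_of_lt (le_trans (Metric.mem_closedBall.mp hy) h1) hn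

lemma borel_eq_cylBasis (k : ℕ) (hk : 0 < k) :
    (inferInstance : MeasurableSpace ℤ_[p]) = MeasurableSpace.generateFrom (cylBasis (p := p) k) := by
  rw [BorelSpace.measurable_eq (α := ℤ_[p]), (cylBasis_isBasis k hk).borel_eq_generateFrom]

lemma cylBasis_isPiSystem (k : ℕ) : IsPiSystem (cylBasis (p := p) k) := by
  rintro s ⟨n₁, a, rfl⟩ t ⟨n₂, b, rfl⟩ hne
  obtain ⟨z, hza, hzb⟩ := hne
  simp only [Set.mem_inter_iff, Set.mem_preimage, Set.mem_singleton_iff] at hza hzb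
  rcases le_total (n₁ * k) (n₂ * k) with h | h
  · have hsub : (PadicInt.toZModPow (n₂*k) : ℤ_[p] → _) ⁻¹' {b}
        ⊆ (PadicInt.toZModPow (n₁*k) : ℤ_[p] → _) ⁻¹' {a} := by
      intro y hy
      simp only [Set.mem_preimage, Set.mem_singleton_iff] at hy ⊢
      rw [← PadicInt.cast_toZModPow _ _ h, hy, ← hzb, PadicInt.cast_toZModPow _ _ h, hza]
    rw [Set.inter_eq_right.mpr hsub]
    exact ⟨n₂, b, rfl⟩
  · have hsub : (PadicInt.toZModPow (n₁*k) : ℤ_[p] → _) ⁻¹' {a}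
        ⊆ (PadicInt.toZModPow (n₂*k) : ℤ_[p] → _) ⁻¹' {b} := by
      intro y hy
      simp only [Set.mem_preimage, Set.mem_singleton_iff] at hy ⊢
      rw [← PadicInt.cast_toZModPow _ _ h, hy, ← hza, PadicInt.cast_toZModPow _ _ h, hzb]
    rw [Set.inter_eq_left.mpr hsub]
    exact ⟨n₁, a, rfl⟩

end PadicAux

lemma fiber_meas {G F : Type*} [AddGroup G] [TopologicalSpace G] [IsTopologicalAddGroup G]
    [MeasurableSpace G] [BorelSpace G] (μ : Measure G) [IsProbabilityMeasure μ]
    [μ.IsAddLeftInvariant] [Fintype F] [AddGroup F] (f : G → F)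
    (hadd : ∀ x y, f (x + y) = f x + f y)
    (hsurj : Function.Surjective f) (hmeas : ∀ b : F, MeasurableSet (f ⁻¹' {b})) (a : F) :
    μ (f ⁻¹' {a}) = (Fintype.card F : ENNReal)⁻¹ := by
  classical
  have key : ∀ b : F, μ (f ⁻¹' {b}) = μ (f ⁻¹' {0}) := by
    intro b
    obtain ⟨g, hg⟩ := hsurj b
    have : (fun x => g + x) ⁻¹' (f ⁻¹' {b}) = f ⁻¹' {0} := by
      ext x
      simp only [Set.mem_preimage, Set.mem_singleton_iff, hadd, hg]
      constructor
      · intro h; have := congrArg (fun z => -b + z) h; simpa using this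
      · intro h; rw [h, add_zero]
    rw [← this, measure_preimage_add]
  have huniv : (Set.univ : Set G) = ⋃ b : F, f ⁻¹' {b} := by
    ext x; simp
  have hdisj : Pairwise (Disjoint on fun b : F => f ⁻¹' {b}) := by
    intro b c hbc
    simp only [Function.onFun, Set.disjoint_left, Set.mem_preimage, Set.mem_singleton_iff]
    intro x hx1 hx2; exact hbc (hx1 ▸ hx2 ▸ rfl)
  have hsum : (Fintype.card F : ENNReal) * μ (f ⁻¹' {0}) = 1 := by
    have h1 : μ (Set.univ) = 1 := measure_univ
    rw [huniv, measure_iUnion hdisj hmeas] at h1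
    rw [tsum_fintype] at h1
    calc (Fintype.card F : ENNReal) * μ (f ⁻¹' {0})
        = ∑ b : F, μ (f ⁻¹' {(0:F)}) := by rw [Finset.sum_const, card_univ, nsmul_eq_mul]
      _ = ∑ b : F, μ (f ⁻¹' {b}) := by exact Finset.sum_congr rfl (fun b _ => (key b).symm)
      _ = 1 := h1
  have hc0 : (Fintype.card F : ENNReal) ≠ 0 := by
    simp [Fintype.card_ne_zero]
  have hctop : (Fintype.card F : ENNReal) ≠ ⊤ := by simp
  rw [key a]
  calc μ (f ⁻¹' {0}) = ((Fintype.card F : ENNReal)⁻¹ * (Fintype.card F : ENNReal)) * μ (f ⁻¹' {0}) := by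
        rw [ENNReal.inv_mul_cancel hc0 hctop, one_mul]
    _ = (Fintype.card F : ENNReal)⁻¹ := by rw [mul_assoc, hsum, mul_one]

section Interleave
variable [hp : Fact p.Prime] {k : ℕ}

/-- The interleaving map on finite levels. -/
noncomputable def Phi (k n : ℕ) (hk : 0 < k) (b : Fin k → ZMod (p ^ n)) : ZMod (p ^ (n * k)) :=
  ((∑ m ∈ range (n * k), natDigit p (b ⟨m % k, Nat.mod_lt m hk⟩).val (m / k) * p ^ m : ℕ) : ZMod (p ^ (n * k)))

/-- The deinterleaving map on finite levels. -/
noncomputable def Psi (k n : ℕ) (a : ZMod (p ^ (n * k))) : Fin k → ZMod (p ^ n) :=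
  fun j => ((∑ i ∈ range n, natDigit p a.val (i * k + (j : ℕ)) * p ^ i : ℕ) : ZMod (p ^ n))

lemma toZModPow_Hk (n : ℕ) (hk : 0 < k) (x : Fin k → ℤ_[p]) :
    PadicInt.toZModPow (n * k) (Hk k hk x) = Phi k n hk (redVec n x) := by
  rw [Hk, toZModPow_tsum_digits, Phi]
  congr 1
  apply Finset.sum_congr rfl
  intro m hm
  rw [Finset.mem_range] at hm
  have hdiv : m / k < n := Nat.div_lt_iff_lt_mul hk |>.mpr hm
  rw [padicDigit_eq_natDigit _ hdiv]
  rfl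

lemma Psi_Phi (n : ℕ) (hk : 0 < k) (b : Fin k → ZMod (p ^ n)) :
    Psi k n (Phi k n hk b) = b := by
  have hplt : 1 < p := p_one_lt
  have hd : ∀ m, natDigit p (b ⟨m % k, Nat.mod_lt m hk⟩).val (m / k) < p :=
    fun m => natDigit_lt hplt _ _
  have hval : (Phi k n hk b).val
      = ∑ m ∈ range (n * k), natDigit p (b ⟨m % k, Nat.mod_lt m hk⟩).val (m / k) * p ^ m := by
    rw [Phi, ZMod.val_cast_of_lt (sum_digits_lt hplt hd _)]
  funext j
  rw [Psi]
  have hdig : ∀ i ∈ range n,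
      natDigit p (Phi k n hk b).val (i * k + (j:ℕ)) * p ^ i = natDigit p (b j).val i * p ^ i := by
    intro i hi
    rw [Finset.mem_range] at hi
    have hlt : i * k + (j:ℕ) < n * k := by
      have hj : (j:ℕ) < k := j.isLt
      calc i * k + (j:ℕ) < i * k + k := by omega
        _ = (i+1) * k := by ring
        _ ≤ n * k := Nat.mul_le_mul_right _ (by omega)
    rw [hval, natDigit_sum hplt _ _ _ hd hlt]
    have h1 : (i * k + (j:ℕ)) % k = (j:ℕ) := by
      rw [mul_comm i k, Nat.mul_add_mod, Nat.mod_eq_of_lt j.isLt]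
    have h2 : (i * k + (j:ℕ)) / k = i := by
      rw [mul_comm i k, Nat.mul_add_div hk, Nat.div_eq_of_lt j.isLt, add_zero]
    simp only [h1, h2, Fin.eta]
  rw [Finset.sum_congr rfl hdig, sum_natDigit_eq_mod, Nat.mod_eq_of_lt (ZMod.val_lt _),
    ZMod.natCast_val, ZMod.cast_id]

lemma Phi_bijective (n : ℕ) (hk : 0 < k) : Function.Bijective (Phi (p := p) k n hk) := by
  have hinj : Function.Injective (Phi (p := p) k n hk) := by
    intro b c h
    have := congrArg (Psi k n) h
    rwa [Psi_Phi, Psi_Phi] at this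
  rw [Fintype.bijective_iff_injective_and_card]
  refine ⟨hinj, ?_⟩
  rw [ZMod.card, Fintype.card_fun, ZMod.card, Fintype.card_fin, ← pow_mul]

lemma Hk_preimage_cyl (n : ℕ) (hk : 0 < k) (a : ZMod (p ^ (n * k))) :
    Hk k hk ⁻¹' ((PadicInt.toZModPow (n*k) : ℤ_[p] → ZMod (p^(n*k))) ⁻¹' {a})
      = redVec n ⁻¹' {Psi k n a} := by
  have hbij := Phi_bijective (p := p) n hk
  ext x
  simp only [Set.mem_preimage, Set.mem_singleton_iff, toZModPow_Hk n hk x]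
  constructor
  · rintro rfl; rw [Psi_Phi]
  · intro h
    obtain ⟨b, rfl⟩ := hbij.2 a
    rw [Psi_Phi] at h
    rw [h]

end Interleave

section Assemble
variable [hp : Fact p.Prime]

instance : IsProbabilityMeasure (haarZ (p := p)) :=
  ⟨by rw [haarZ, ← TopologicalSpace.PositiveCompacts.coe_top (α := ℤ_[p])]
      exact Measure.addHaarMeasure_self⟩

instance (k : ℕ) : IsProbabilityMeasure (haarZk (p := p) k) :=
  ⟨by rw [haarZk, ← TopologicalSpace.PositiveCompacts.coe_top (α := Fin k → ℤ_[p])]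
      exact Measure.addHaarMeasure_self⟩

instance : (haarZ (p := p)).IsAddLeftInvariant :=
  Measure.isAddLeftInvariant_addHaarMeasure _

instance (k : ℕ) : (haarZk (p := p) k).IsAddLeftInvariant :=
  Measure.isAddLeftInvariant_addHaarMeasure _

lemma redVec_fiber_measurable {k : ℕ} (n : ℕ) (b : Fin k → ZMod (p ^ n)) :
    MeasurableSet (redVec (p := p) n ⁻¹' {b}) := by
  have : redVec (p := p) n ⁻¹' {b}
      = ⋂ j, (fun x : Fin k → ℤ_[p] => x j) ⁻¹' ((PadicInt.toZModPow n) ⁻¹' {b j}) := by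
    ext x
    simp [redVec, funext_iff, Set.mem_iInter]
  rw [this]
  exact MeasurableSet.iInter fun j => (measurable_pi_apply j) (cyl_measurable n (b j))

set_option maxHeartbeats 1000000 in
lemma haarZ_cyl (N : ℕ) (a : ZMod (p ^ N)) :
    haarZ ((PadicInt.toZModPow N : ℤ_[p] → ZMod (p ^ N)) ⁻¹' {a}) = ((p : ENNReal) ^ N)⁻¹ := by
  have hadd : ∀ x y : ℤ_[p],
      PadicInt.toZModPow N (x + y) = PadicInt.toZModPow N x + PadicInt.toZModPow N y :=
    fun x y => map_add _ x y
  have h := fiber_meas haarZ (PadicInt.toZModPow N) hadd (toZModPow_surj N)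
    (cyl_measurable N) a
  rw [h, ZMod.card]
  push_cast
  rfl

set_option maxHeartbeats 1000000 in
lemma haarZk_fiber {k : ℕ} (n : ℕ) (b : Fin k → ZMod (p ^ n)) :
    haarZk k (redVec (p := p) n ⁻¹' {b}) = ((p : ENNReal) ^ (n * k))⁻¹ := by
  have hadd : ∀ x y : Fin k → ℤ_[p], redVec n (x + y) = redVec n x + redVec n y := by
    intro x y; funext j; simp [redVec, map_add]
  have hsurj : Function.Surjective (redVec (p := p) (k := k) n) := by
    intro b
    exact ⟨fun j => (((b j).val : ℕ) : ℤ_[p]), funext fun j => by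
      simp [redVec, map_natCast, ZMod.natCast_val, ZMod.cast_id]⟩
  rw [fiber_meas (haarZk k) (redVec n) hadd hsurj (redVec_fiber_measurable n) b,
    Fintype.card_fun, ZMod.card, Fintype.card_fin, ← pow_mul]
  push_cast
  rfl

lemma Hk_measurable {k : ℕ} (hk : 0 < k) : Measurable (Hk (p := p) k hk) := by
  have hB := borel_eq_cylBasis (p := p) k hk
  have hmeas : @Measurable _ _ _ (MeasurableSpace.generateFrom (cylBasis (p := p) k))
      (Hk (p := p) k hk) := by
    apply measurable_generateFrom
    rintro t ⟨n, a, rfl⟩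
    rw [Hk_preimage_cyl n hk a]
    exact redVec_fiber_measurable n _
  rwa [← hB] at hmeas

end Assemble

theorem stmt4 [Fact p.Prime] {k : ℕ} (hk : 0 < k) :
    MeasurePreserving (Hk (p := p) k hk) (haarZk k) haarZ := by
  refine ⟨Hk_measurable hk, ?_⟩
  haveI : IsProbabilityMeasure ((haarZk (p := p) k).map (Hk k hk)) :=
    Measure.isProbabilityMeasure_map (Hk_measurable hk).aemeasurable
  apply MeasureTheory.ext_of_generate_finite (cylBasis (p := p) k)
    (borel_eq_cylBasis k hk) (cylBasis_isPiSystem k)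
  · rintro s ⟨n, a, rfl⟩
    rw [Measure.map_apply (Hk_measurable hk) (cyl_measurable _ a), Hk_preimage_cyl n hk a,
      haarZk_fiber n _, haarZ_cyl]
  · rw [measure_univ, measure_univ]
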